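/- arXiv:2006.07592 — 3 statements merged into one kernel-verified Lean document; each statement's English description precedes it below -/
import Mathlib

section
/- For any two vectors v, w ∈ ℝ² with w ≠ 0, one has v·(v − w)/|w| ≥ |v| − |w|, and consequently for piecewise linear curves X^{m+1}, X^m over the same partition, Σ_j (h_j^{m+1}·(h_j^{m+1} − h_j^m))/|h_j^m| ≥ Σ_j |h_j^{m+1}| − Σ_j |h_j^m|, i.e., the discrete length functional satisfies (∂_s X^{m+1}, ∂_s(X^{m+1} − X^m))_{Γ^m}^h ≥ |Γ^{m+1}| − |Γ^m|. -/
open RealInnerProductSpace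

lemma key_vec (v w : EuclideanSpace ℝ (Fin 2)) (hw : w ≠ 0) :
    ⟪v, v - w⟫ / ‖w‖ ≥ ‖v‖ - ‖w‖ := by
  have hwpos : (0:ℝ) < ‖w‖ := norm_pos_iff.mpr hw
  have h1 : ⟪v, v - w⟫ = ‖v‖^2 - ⟪v, w⟫ := by
    rw [inner_sub_right, real_inner_self_eq_norm_sq]
  have h2 : ⟪v, w⟫ ≤ ‖v‖ * ‖w‖ := real_inner_le_norm v w
  rw [ge_iff_le, le_div_iff₀ hwpos]
  nlinarith [sq_nonneg (‖v‖ - ‖w‖), norm_nonneg v]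

/-- The vector inequality `v·(v − w)/|w| ≥ |v| − |w|` for `w ≠ 0`, and the resulting
discrete length estimate: for segment vectors `h'_j = h_j^{m+1}`, `h_j = h_j^m` (all nonzero),
`Σ_j (h'_j·(h'_j − h_j))/|h_j| ≥ Σ_j |h'_j| − Σ_j |h_j|`,
i.e. `(∂_s X^{m+1}, ∂_s(X^{m+1} − X^m))_{Γ^m}^h ≥ |Γ^{m+1}| − |Γ^m|`. -/
theorem stmt_3 (J : ℕ) (h h' : Fin J → EuclideanSpace ℝ (Fin 2))
    (hne : ∀ j, h j ≠ 0) :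
    (∀ v w : EuclideanSpace ℝ (Fin 2), w ≠ 0 → ⟪v, v - w⟫ / ‖w‖ ≥ ‖v‖ - ‖w‖) ∧
    ∑ j, ⟪h' j, h' j - h j⟫ / ‖h j‖ ≥ (∑ j, ‖h' j‖) - ∑ j, ‖h j‖ := by
  refine ⟨fun v w hw => key_vec v w hw, ?_⟩
  rw [← Finset.sum_sub_distrib]
  exact Finset.sum_le_sum fun j _ => key_vec (h' j) (h j) (hne j)
end

section
/- Let Γ^m be a polygonal curve with vertices X^m(α_0), …, X^m(α_J) in ℝ², no two consecutive vertices equal, and such that the first and last segments are not parallel to the x-axis (i.e., their normal vectors have nonzero first component). Suppose κ : {α_0,…,α_J} → ℝ satisfies the discrete orthogonality relation Σ_j ½|h_j|[ (κ n_j · g)(α_{j-1}) + (κ n_j · g)(α_j) ] = 0 for all piecewise linear test vector fields g = (g₁, g₂) with g₂(α_0) = g₂(α_J) = 0, where h_j = X^m(α_j) − X^m(α_{j-1}) and n_j = h_j^⊥/|h_j|. If additionally at interior vertices the vectors h_j + h_{j+1} are nonzero, then κ(α_j) = 0 for all j. -/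
open Complex Finset

/-- Euclidean dot product of two points of `ℝ² ≃ ℂ`. -/
noncomputable def dot2 (v w : ℂ) : ℝ := v.re * w.re + v.im * w.im

lemma dot2_zero_right (w : ℂ) : dot2 w 0 = 0 := by simp [dot2]
lemma dot2_one (w : ℂ) : dot2 w 1 = w.re := by simp [dot2]
lemma dot2_smul (c : ℝ) (w v : ℂ) : dot2 (c • w) v = c * dot2 w v := by
  simp [dot2]; ring
lemma dot2_add_left (w w' v : ℂ) : dot2 (w + w') v = dot2 w v + dot2 w' v := by
  simp [dot2]; ring
lemma dot2_self (v : ℂ) : dot2 v v = Complex.normSq v := by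
  simp [dot2, Complex.normSq_apply]

/-- Discrete curvature orthogonality forces `κ = 0`: for a polygonal curve with
vertices `X 0, …, X J`, segment vectors `h j = X (j+1) − X j` all nonzero,
unit normals `n j = h_j^⊥/|h_j|` whose first and last first components are nonzero,
and `h j + h (j+1) ≠ 0` at interior vertices, if the mass-lumped (trapezoidal)
inner product `(κ n, g)_{Γ}^h` vanishes for all piecewise linear test fields `g`
with vanishing second component at the endpoints, then `κ` vanishes at every node. -/
theorem stmt_11 (J : ℕ) (hJ : 1 ≤ J) (X : ℕ → ℂ) (κ : ℕ → ℝ)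
    (h : ℕ → ℂ) (n : ℕ → ℂ)
    (hdef : ∀ j, h j = X (j + 1) - X j)
    (hne : ∀ j < J, h j ≠ 0)
    (hn : ∀ j, n j = ‖h j‖⁻¹ • (Complex.I * h j))
    (hfirst : (n 0).re ≠ 0) (hlast : (n (J - 1)).re ≠ 0)
    (hint : ∀ j, 0 < j → j < J → h (j - 1) + h j ≠ 0)
    (orth : ∀ g : ℕ → ℂ, (g 0).im = 0 → (g J).im = 0 →
      ∑ j ∈ Finset.range J, (1 / 2 : ℝ) * ‖h j‖ *
        (κ j * dot2 (n j) (g j) + κ (j + 1) * dot2 (n j) (g (j + 1))) = 0) :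
    ∀ j ≤ J, κ j = 0 := by
  have hnorm : ∀ i, i < J → (0 : ℝ) < ‖h i‖ := fun i hi => norm_pos_iff.mpr (hne i hi)
  have hndot : ∀ i, i < J → ∀ v : ℂ, ‖h i‖ * dot2 (n i) v = dot2 (Complex.I * h i) v := by
    intro i hi v
    rw [hn, dot2_smul, ← mul_assoc, mul_inv_cancel₀ (hnorm i hi).ne', one_mul]
  intro j hj
  rcases Nat.eq_zero_or_pos j with rfl | hj0
  · -- j = 0 : test function = indicator at 0 with value 1
    have o := orth (fun i => if i = 0 then 1 else 0) (by simp)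
      (by simp [Nat.one_le_iff_ne_zero.mp hJ])
    rw [Finset.sum_eq_single 0] at o
    · norm_num [dot2_zero_right, dot2_one] at o
      rcases o with o | o | o
      · exact absurd o (hne 0 hJ)
      · exact o
      · exact absurd o hfirst
    · intro b _ hb
      norm_num [if_neg hb, dot2_zero_right]
    · intro hc; exact absurd (Finset.mem_range.mpr hJ) hc
  rcases Nat.lt_or_ge j J with hjJ | hjJ
  · -- interior node : 0 < j < J
    set v : ℂ := Complex.I * (h (j - 1) + h j) with hv
    have hvne : v ≠ 0 := mul_ne_zero Complex.I_ne_zero (hint j hj0 hjJ)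
    have o := orth (fun i => if i = j then v else 0)
      (by simp [if_neg (by omega : ¬ (0 : ℕ) = j)])
      (by simp [if_neg (by omega : ¬ J = j)])
    have hsplit : ∀ i ∈ Finset.range J,
        (1 / 2 : ℝ) * ‖h i‖ *
          (κ i * dot2 (n i) (if i = j then v else 0) +
           κ (i + 1) * dot2 (n i) (if i + 1 = j then v else 0)) =
        (if i = j then (1 / 2 : ℝ) * ‖h j‖ * (κ j * dot2 (n j) v) else 0) +
        (if i = j - 1 then (1 / 2 : ℝ) * ‖h (j - 1)‖ * (κ j * dot2 (n (j - 1)) v) else 0) := by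
      intro i _
      by_cases h1 : i = j
      · subst h1
        rw [if_pos rfl, if_neg (by omega : ¬ i + 1 = i), if_pos rfl,
          if_neg (by omega : ¬ i = i - 1)]
        simp [dot2_zero_right]
      · by_cases h2 : i = j - 1
        · have hi1 : i + 1 = j := by omega
          rw [if_neg h1, if_pos hi1, if_neg h1, if_pos h2, hi1, h2]
          simp [dot2_zero_right]
        · rw [if_neg h1, if_neg (by omega : ¬ i + 1 = j), if_neg h1, if_neg h2]
          simp [dot2_zero_right]
    rw [Finset.sum_congr rfl hsplit, Finset.sum_add_distrib,
      Finset.sum_ite_eq' _ j, Finset.sum_ite_eq' _ (j - 1),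
      if_pos (Finset.mem_range.mpr hjJ),
      if_pos (Finset.mem_range.mpr (by omega : j - 1 < J))] at o
    have e1 : (1 / 2 : ℝ) * ‖h j‖ * (κ j * dot2 (n j) v) =
        (1 / 2 : ℝ) * κ j * dot2 (Complex.I * h j) v := by
      rw [← hndot j hjJ]; ring
    have e2 : (1 / 2 : ℝ) * ‖h (j - 1)‖ * (κ j * dot2 (n (j - 1)) v) =
        (1 / 2 : ℝ) * κ j * dot2 (Complex.I * h (j - 1)) v := by
      rw [← hndot (j - 1) (by omega)]; ring
    rw [e1, e2, ← mul_add, ← dot2_add_left] at o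
    have hsum : Complex.I * h j + Complex.I * h (j - 1) = v := by
      rw [hv, mul_add]; ring
    rw [hsum, dot2_self] at o
    have hpos : 0 < Complex.normSq v := Complex.normSq_pos.mpr hvne
    rcases mul_eq_zero.mp o with o | o
    · rcases mul_eq_zero.mp o with o | o
      · norm_num at o
      · exact o
    · exact absurd o hpos.ne'
  · -- j = J : test function = indicator at J with value 1
    have hjeq : j = J := le_antisymm hj hjJ
    subst hjeq
    have o := orth (fun i => if i = j then 1 else 0)
      (by simp [if_neg (by omega : ¬ (0 : ℕ) = j)]) (by simp)
    rw [Finset.sum_eq_single (j - 1)] at o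
    · rw [if_neg (by omega : ¬ j - 1 = j), if_pos (by omega : j - 1 + 1 = j),
        show j - 1 + 1 = j from by omega, dot2_zero_right, dot2_one,
        mul_zero, zero_add] at o
      rcases mul_eq_zero.mp o with o | o
      · rcases mul_eq_zero.mp o with o | o
        · norm_num at o
        · exact absurd o (hnorm (j - 1) (by omega)).ne'
      · rcases mul_eq_zero.mp o with o | o
        · exact o
        · exact absurd o hlast
    · intro b hb hbne
      have hblt := Finset.mem_range.mp hb
      norm_num [if_neg (by omega : ¬ b = j), if_neg (by omega : ¬ b + 1 = j),
        dot2_zero_right]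
    · intro hc; exact absurd (Finset.mem_range.mpr (by omega : j - 1 < j)) hc
end

section
/- Discrete contact angle error bound: let X^h be a polygonal equilibrium interface solving the discrete curvature equation with contact-angle boundary terms, so that ½ κ^h(0) n_{1,1} Δs − cos θ^h + cos θ_Y = 0, where Δs = |X^h(α₁) − X^h(α₀)|, θ^h is the discrete contact angle (so n_{1,1} = −sin θ^h up to sign) and κ^h(0) is the discrete curvature at the contact node. Then |cos θ^h − cos θ_Y| = ½|κ^h(0) sin θ^h| Δs. Consequently, if |κ^h(0)| ≤ C (Δs)^{2(ν−1)} for some ν ∈ (1/2, 1], then |cos θ^h − cos θ_Y| ≤ (C/2)(Δs)^{2ν−1}, and since |θ^h − θ_Y| ≤ (π/ sin θ_*) |cos θ^h − cos θ_Y| on a neighborhood where sin is bounded below by sin θ_* > 0, also |θ^h − θ_Y| ≤ C' h^{2ν−1}. -/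
open Real

/-- Discrete contact angle error bound: from the tested discrete curvature equation
`½ κ₀ n₁,₁ Δs − cos θʰ + cos θ_Y = 0` with `|n₁,₁| = |sin θʰ|`, one gets
`|cos θʰ − cos θ_Y| = ½|κ₀ sin θʰ| Δs`; if moreover `|κ₀| ≤ C (Δs)^{2(ν−1)}` then
`|cos θʰ − cos θ_Y| ≤ (C/2)(Δs)^{2ν−1}`, and if additionally
`|θʰ − θ_Y| ≤ (π/sin θ⋆)|cos θʰ − cos θ_Y|` and `Δs ≤ h`, then
`|θʰ − θ_Y| ≤ C' h^{2ν−1}` with `C' = (π/sin θ⋆)(C/2)`. -/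
theorem stmt_18 (κ₀ n₁₁ Δs θh θY C ν θstar hmesh : ℝ)
    (hΔs : 0 < Δs) (hC : 0 ≤ C) (hν : ν ∈ Set.Ioc (1 / 2 : ℝ) 1)
    (heq : (1 / 2) * κ₀ * n₁₁ * Δs - Real.cos θh + Real.cos θY = 0)
    (hn : |n₁₁| = |Real.sin θh|) :
    |Real.cos θh - Real.cos θY| = (1 / 2) * |κ₀ * Real.sin θh| * Δs ∧
    (|κ₀| ≤ C * Δs ^ (2 * (ν - 1)) →
      |Real.cos θh - Real.cos θY| ≤ (C / 2) * Δs ^ (2 * ν - 1)) ∧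
    (|κ₀| ≤ C * Δs ^ (2 * (ν - 1)) → 0 < Real.sin θstar → Δs ≤ hmesh →
      |θh - θY| ≤ (π / Real.sin θstar) * |Real.cos θh - Real.cos θY| →
      |θh - θY| ≤ (π / Real.sin θstar) * (C / 2) * hmesh ^ (2 * ν - 1)) := by
  have hexp : (0:ℝ) < 2 * ν - 1 := by
    have := hν.1; linarith
  have h1 : |Real.cos θh - Real.cos θY| = (1 / 2) * |κ₀ * Real.sin θh| * Δs := by
    have hd : Real.cos θh - Real.cos θY = (1 / 2) * κ₀ * n₁₁ * Δs := by linarith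
    rw [hd]
    rw [abs_mul, abs_mul, abs_mul, abs_of_pos hΔs, abs_mul, ← hn,
      abs_of_nonneg (by norm_num : (0:ℝ) ≤ (1/2:ℝ))]
    ring
  have h2 : |κ₀| ≤ C * Δs ^ (2 * (ν - 1)) →
      |Real.cos θh - Real.cos θY| ≤ (C / 2) * Δs ^ (2 * ν - 1) := by
    intro hk
    rw [h1]
    have hsin : |κ₀ * Real.sin θh| ≤ C * Δs ^ (2 * (ν - 1)) := by
      rw [abs_mul]
      calc |κ₀| * |Real.sin θh| ≤ |κ₀| * 1 := by
            exact mul_le_mul_of_nonneg_left (Real.abs_sin_le_one θh) (abs_nonneg _)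
        _ = |κ₀| := mul_one _
        _ ≤ C * Δs ^ (2 * (ν - 1)) := hk
    have : (1/2) * |κ₀ * Real.sin θh| * Δs ≤ (1/2) * (C * Δs ^ (2 * (ν - 1))) * Δs := by
      have := mul_le_mul_of_nonneg_left hsin (by norm_num : (0:ℝ) ≤ (1/2:ℝ))
      exact mul_le_mul_of_nonneg_right this hΔs.le
    refine this.trans_eq ?_
    have : Δs ^ (2 * (ν - 1)) * Δs = Δs ^ (2 * ν - 1) := by
      rw [show (2 * ν - 1) = 2 * (ν - 1) + 1 by ring, Real.rpow_add hΔs, Real.rpow_one]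
    nlinarith [this]
  refine ⟨h1, h2, ?_⟩
  intro hk hθ hΔh hlip
  have hcb := h2 hk
  have hpos : 0 ≤ π / Real.sin θstar := div_nonneg Real.pi_pos.le hθ.le
  have hmono : Δs ^ (2 * ν - 1) ≤ hmesh ^ (2 * ν - 1) :=
    Real.rpow_le_rpow hΔs.le hΔh hexp.le
  calc |θh - θY| ≤ (π / Real.sin θstar) * |Real.cos θh - Real.cos θY| := hlip
    _ ≤ (π / Real.sin θstar) * ((C / 2) * Δs ^ (2 * ν - 1)) :=
        mul_le_mul_of_nonneg_left hcb hpos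
    _ ≤ (π / Real.sin θstar) * ((C / 2) * hmesh ^ (2 * ν - 1)) := by
        have : (C/2) * Δs ^ (2*ν-1) ≤ (C/2) * hmesh ^ (2*ν-1) :=
          mul_le_mul_of_nonneg_left hmono (by linarith)
        exact mul_le_mul_of_nonneg_left this hpos
    _ = (π / Real.sin θstar) * (C / 2) * hmesh ^ (2 * ν - 1) := by ring
end
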